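/- Let u = (−log 2, log 2) and v = (log 3, −log 3) in ℝ², and let C = {(x, −x) : x ∈ ℝ}. Then the set D = {x·u + y·v : x, y ∈ ℕ} is a dense subset of the line C. -/

import Mathlib

open Real

/-- If `b * log 3 - a * log 2 = 0` with natural `a, b`, then both are zero. -/
lemma stmt13_zero (a b : ℕ) (h : (b : ℝ) * Real.log 3 - a * Real.log 2 = 0) :
    a = 0 ∧ b = 0 := by
  have h' : (b : ℝ) * Real.log 3 = a * Real.log 2 := by linarith
  have h3 : Real.exp ((b : ℝ) * Real.log 3) = (3 : ℝ) ^ b := by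
    rw [Real.exp_nat_mul, Real.exp_log (by norm_num)]
  have h2 : Real.exp ((a : ℝ) * Real.log 2) = (2 : ℝ) ^ a := by
    rw [Real.exp_nat_mul, Real.exp_log (by norm_num)]
  have hpow : (3 : ℝ) ^ b = (2 : ℝ) ^ a := by rw [← h3, ← h2, h']
  have hn : (3 : ℕ) ^ b = 2 ^ a := by exact_mod_cast hpow
  rcases Nat.eq_zero_or_pos b with hb | hb
  · subst hb
    simp at hn
    rcases Nat.eq_zero_or_pos a with ha | ha
    · exact ⟨ha, rfl⟩
    · exfalso
      have h21 : (2 : ℕ) = 1 := (Nat.pow_eq_one.mp hn.symm).resolve_right ha.ne'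
      norm_num at h21
  · exfalso
    have hdvd : (3 : ℕ) ∣ 2 ^ a := by
      rw [← hn]
      exact dvd_pow_self 3 hb.ne'
    have := Nat.Prime.dvd_of_dvd_pow (p := 3) (by norm_num) hdvd
    norm_num at this

/-- Fractional-part style function: `y log 3` reduced mod `log 2`. -/
noncomputable def stmt13_f (y : ℕ) : ℝ :=
  y * Real.log 3 - (⌊(y * Real.log 3) / Real.log 2⌋₊ : ℕ) * Real.log 2

lemma stmt13_f_mem (y : ℕ) : 0 ≤ stmt13_f y ∧ stmt13_f y < Real.log 2 := by
  have hl2 : 0 < Real.log 2 := Real.log_pos (by norm_num)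
  have hl3 : 0 ≤ Real.log 3 := Real.log_nonneg (by norm_num)
  have harg : 0 ≤ (y : ℝ) * Real.log 3 / Real.log 2 := by positivity
  have h1 := Nat.floor_le harg
  have h2 := Nat.lt_floor_add_one ((y : ℝ) * Real.log 3 / Real.log 2)
  constructor
  · unfold stmt13_f
    have h1' : (⌊(y : ℝ) * Real.log 3 / Real.log 2⌋₊ : ℝ) * Real.log 2 ≤ (y : ℝ) * Real.log 3 := by
      rw [← le_div_iff₀ hl2]
      exact h1
    linarith
  · unfold stmt13_f
    have h2' : (y : ℝ) * Real.log 3 < ((⌊(y : ℝ) * Real.log 3 / Real.log 2⌋₊ : ℝ) + 1) * Real.log 2 := by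
      rw [← div_lt_iff₀ hl2]
      exact h2
    linarith

/-- From a pair `y2 < y1` with close fractional parts, produce natural
coefficients realizing the difference. -/
lemma stmt13_diff {y1 y2 : ℕ} (h : y2 < y1) :
    ∃ a b : ℕ, 0 < b ∧ (b : ℝ) * Real.log 3 - a * Real.log 2 = stmt13_f y1 - stmt13_f y2 := by
  have hl2 : 0 < Real.log 2 := Real.log_pos (by norm_num)
  have hl23 : Real.log 2 < Real.log 3 := Real.log_lt_log (by norm_num) (by norm_num)
  set x1 := ⌊(y1 : ℝ) * Real.log 3 / Real.log 2⌋₊ with hx1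
  set x2 := ⌊(y2 : ℝ) * Real.log 3 / Real.log 2⌋₊ with hx2
  have hy : (1 : ℝ) ≤ (y1 : ℝ) - y2 := by
    have : (y2 : ℝ) + 1 ≤ y1 := by exact_mod_cast h
    linarith
  have hl3 : 0 < Real.log 3 := lt_trans hl2 hl23
  have hf1 := stmt13_f_mem y1
  have hf2 := stmt13_f_mem y2
  have key : ((x1 : ℝ) - x2) * Real.log 2
      = ((y1 : ℝ) - y2) * Real.log 3 - (stmt13_f y1 - stmt13_f y2) := by
    unfold stmt13_f
    rw [← hx1, ← hx2]
    ring
  have hxlt : x2 < x1 := by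
    by_contra hle
    push_neg at hle
    have hc : (x1 : ℝ) ≤ x2 := by exact_mod_cast hle
    nlinarith [hf1.1, hf1.2, hf2.1, hf2.2]
  refine ⟨x1 - x2, y1 - y2, by omega, ?_⟩
  have c1 : ((y1 - y2 : ℕ) : ℝ) = (y1 : ℝ) - y2 := by
    push_cast [Nat.cast_sub h.le]; ring
  have c2 : ((x1 - x2 : ℕ) : ℝ) = (x1 : ℝ) - x2 := by
    push_cast [Nat.cast_sub hxlt.le]; ring
  rw [c1, c2]
  linarith [key]

/-- There exist natural coefficients giving a nonzero value arbitrarily close to `0`. -/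
lemma stmt13_small (ε : ℝ) (hε : 0 < ε) :
    ∃ a b : ℕ, 0 < b ∧ |(b : ℝ) * Real.log 3 - a * Real.log 2| < ε := by
  have hl2 : 0 < Real.log 2 := Real.log_pos (by norm_num)
  obtain ⟨N, hN⟩ := exists_nat_gt (Real.log 2 / ε)
  have hN0 : 0 < N := by
    have h0 : 0 < Real.log 2 / ε := by positivity
    exact_mod_cast h0.trans hN
  have hN0' : (0 : ℝ) < N := by exact_mod_cast hN0
  have hNe : Real.log 2 / N < ε := by
    rw [div_lt_iff₀ hN0']
    rw [div_lt_iff₀ hε] at hN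
    linarith
  have hmaps : ∀ y ∈ Finset.range (N + 1),
      ⌊stmt13_f y * N / Real.log 2⌋₊ ∈ Finset.range N := by
    intro y _
    have hf := stmt13_f_mem y
    have harg : stmt13_f y * N / Real.log 2 < N := by
      rw [div_lt_iff₀ hl2]
      nlinarith [hf.2]
    rw [Finset.mem_range]
    have hfnn := (stmt13_f_mem y).1
    exact (Nat.floor_lt (div_nonneg (mul_nonneg hfnn (Nat.cast_nonneg N)) hl2.le)).mpr harg
  obtain ⟨y1, hy1, y2, hy2, hne, heq⟩ :=
    Finset.exists_ne_map_eq_of_card_lt_of_maps_to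
      (by simp : (Finset.range N).card < (Finset.range (N + 1)).card) hmaps
  have close : |stmt13_f y1 - stmt13_f y2| < Real.log 2 / N := by
    set a1 := stmt13_f y1 * N / Real.log 2 with ha1
    set a2 := stmt13_f y2 * N / Real.log 2 with ha2
    have hnn1 : (0 : ℝ) ≤ a1 :=
      div_nonneg (mul_nonneg (stmt13_f_mem y1).1 (Nat.cast_nonneg N)) hl2.le
    have hnn2 : (0 : ℝ) ≤ a2 :=
      div_nonneg (mul_nonneg (stmt13_f_mem y2).1 (Nat.cast_nonneg N)) hl2.le
    have hfl1 := Nat.floor_le hnn1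
    have hfl2 := Nat.floor_le hnn2
    have hlt1 := Nat.lt_floor_add_one a1
    have hlt2 := Nat.lt_floor_add_one a2
    rw [heq] at hfl1 hlt1
    have habs : |a1 - a2| < 1 := by
      rw [abs_sub_lt_iff]
      constructor <;> linarith
    have hrepr1 : stmt13_f y1 = a1 * (Real.log 2 / N) := by
      rw [ha1]; field_simp
    have hrepr2 : stmt13_f y2 = a2 * (Real.log 2 / N) := by
      rw [ha2]; field_simp
    have hw : (0 : ℝ) < Real.log 2 / N := by positivity
    calc |stmt13_f y1 - stmt13_f y2| = |a1 - a2| * (Real.log 2 / N) := by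
          rw [hrepr1, hrepr2, ← sub_mul, abs_mul, abs_of_pos hw]
      _ < 1 * (Real.log 2 / N) := by
          exact mul_lt_mul_of_pos_right habs hw
      _ = Real.log 2 / N := one_mul _
  rcases hne.lt_or_gt with hlt | hlt
  · obtain ⟨a, b, hb, hab⟩ := stmt13_diff hlt
    exact ⟨a, b, hb, by rw [hab, abs_sub_comm]; linarith⟩
  · obtain ⟨a, b, hb, hab⟩ := stmt13_diff hlt
    exact ⟨a, b, hb, by rw [hab]; linarith⟩

/-- The set `{b log 3 - a log 2 : a b ∈ ℕ}` approximates every real. -/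
lemma stmt13_approx (t ε : ℝ) (hε : 0 < ε) :
    ∃ a b : ℕ, |((b : ℝ) * Real.log 3 - a * Real.log 2) - t| < ε := by
  have hl2 : 0 < Real.log 2 := Real.log_pos (by norm_num)
  have hl23 : Real.log 2 < Real.log 3 := Real.log_lt_log (by norm_num) (by norm_num)
  -- β = 2 log 3 - 3 log 2 > 0,  δ = log 3 - 2 log 2 < 0
  have h89 : Real.log 8 < Real.log 9 := Real.log_lt_log (by norm_num) (by norm_num)
  have h8 : Real.log 8 = 3 * Real.log 2 := by
    rw [show (8 : ℝ) = 2 ^ 3 by norm_num, Real.log_pow]; push_cast; ring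
  have h9 : Real.log 9 = 2 * Real.log 3 := by
    rw [show (9 : ℝ) = 3 ^ 2 by norm_num, Real.log_pow]; push_cast; ring
  have hβ : 0 < 2 * Real.log 3 - 3 * Real.log 2 := by rw [← h8, ← h9]; linarith
  have h34 : Real.log 3 < Real.log 4 := Real.log_lt_log (by norm_num) (by norm_num)
  have h4 : Real.log 4 = 2 * Real.log 2 := by
    rw [show (4 : ℝ) = 2 ^ 2 by norm_num, Real.log_pow]; push_cast; ring
  have hδ : Real.log 3 - 2 * Real.log 2 < 0 := by rw [← h4] at *; linarith
  obtain ⟨a, b, hb, habs⟩ := stmt13_small ε hε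
  set s : ℝ := (b : ℝ) * Real.log 3 - a * Real.log 2 with hs
  have hsne : s ≠ 0 := by
    intro h0
    have := (stmt13_zero a b h0).2
    omega
  rcases hsne.lt_or_gt with hneg | hpos
  · -- s < 0 : climb with β, descend with s
    set β : ℝ := 2 * Real.log 3 - 3 * Real.log 2 with hβdef
    obtain ⟨m, hm⟩ := exists_nat_ge (t / β)
    have hmβ : t ≤ m * β := by
      rw [div_le_iff₀ hβ] at hm
      linarith
    set n : ℕ := ⌊((m : ℝ) * β - t) / (-s)⌋₊ with hn
    have hsn : (0 : ℝ) < -s := by linarith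
    have hargnn : 0 ≤ ((m : ℝ) * β - t) / (-s) := div_nonneg (by linarith) hsn.le
    have h1 : (n : ℝ) * (-s) ≤ (m : ℝ) * β - t := by
      rw [← le_div_iff₀ hsn]
      exact Nat.floor_le hargnn
    have h2 : (m : ℝ) * β - t < ((n : ℝ) + 1) * (-s) := by
      rw [← div_lt_iff₀ hsn]
      exact Nat.lt_floor_add_one _
    refine ⟨3 * m + n * a, 2 * m + n * b, ?_⟩
    have hval : ((2 * m + n * b : ℕ) : ℝ) * Real.log 3 - ((3 * m + n * a : ℕ) : ℝ) * Real.log 2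
        = (m : ℝ) * β + (n : ℝ) * s := by
      push_cast
      rw [hβdef, hs]
      ring
    rw [hval, abs_lt]
    have habs' : -s < ε := by
      have : |s| = -s := abs_of_neg hneg
      linarith [this ▸ habs]
    constructor <;> linarith
  · -- s > 0 : descend with δ, climb with s
    set d : ℝ := 2 * Real.log 2 - Real.log 3 with hddef
    have hd : 0 < d := by rw [hddef]; linarith
    obtain ⟨m, hm⟩ := exists_nat_ge ((-t) / d)
    have hmd : -t ≤ m * d := by
      rw [div_le_iff₀ hd] at hm
      linarith
    set n : ℕ := ⌊(t + (m : ℝ) * d) / s⌋₊ with hn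
    have hargnn : 0 ≤ (t + (m : ℝ) * d) / s := by
      apply div_nonneg (by linarith) hpos.le
    have h1 : (n : ℝ) * s ≤ t + (m : ℝ) * d := by
      rw [← le_div_iff₀ hpos]
      exact Nat.floor_le hargnn
    have h2 : t + (m : ℝ) * d < ((n : ℝ) + 1) * s := by
      rw [← div_lt_iff₀ hpos]
      exact Nat.lt_floor_add_one _
    refine ⟨2 * m + n * a, m + n * b, ?_⟩
    have hval : ((m + n * b : ℕ) : ℝ) * Real.log 3 - ((2 * m + n * a : ℕ) : ℝ) * Real.log 2
        = -((m : ℝ) * d) + (n : ℝ) * s := by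
      push_cast
      rw [hddef, hs]
      ring
    rw [hval, abs_lt]
    have habs' : s < ε := by
      have : |s| = s := abs_of_pos hpos
      linarith [this ▸ habs]
    constructor <;> linarith

theorem stmt_13 (u v : ℝ × ℝ) (hu : u = (-Real.log 2, Real.log 2))
    (hv : v = (Real.log 3, -Real.log 3))
    (C : Set (ℝ × ℝ)) (hC : C = {p | ∃ x : ℝ, p = (x, -x)})
    (D : Set (ℝ × ℝ))
    (hD : D = {p | ∃ x y : ℕ, p = (x : ℝ) • u + (y : ℝ) • v}) :
    D ⊆ C ∧ C ⊆ closure D := by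
  subst hu hv hC hD
  constructor
  · rintro p ⟨x, y, rfl⟩
    refine ⟨(y : ℝ) * Real.log 3 - x * Real.log 2, ?_⟩
    simp only [Prod.smul_mk, smul_eq_mul, Prod.mk_add_mk, Prod.mk.injEq]
    constructor <;> ring
  · rintro p ⟨t, rfl⟩
    rw [Metric.mem_closure_iff]
    intro ε hε
    obtain ⟨a, b, hab⟩ := stmt13_approx t ε hε
    set s : ℝ := (b : ℝ) * Real.log 3 - a * Real.log 2 with hs
    have hpt : ((a : ℝ)) • ((-Real.log 2, Real.log 2) : ℝ × ℝ)
        + ((b : ℝ)) • ((Real.log 3, -Real.log 3) : ℝ × ℝ) = (s, -s) := by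
      simp only [Prod.smul_mk, smul_eq_mul, Prod.mk_add_mk, Prod.mk.injEq, hs]
      constructor <;> ring
    refine ⟨(s, -s), ⟨a, b, hpt.symm⟩, ?_⟩
    · rw [Prod.dist_eq]
      simp only [Real.dist_eq]
      have h1 : |t - s| < ε := by rw [abs_sub_comm]; exact hab
      have h2 : |-t - -s| = |t - s| := by rw [← abs_neg]; ring_nf
      apply max_lt
      · exact h1
      · rw [h2]; exact h1
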